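/- arXiv:2002.01884 — 2 statements merged into one kernel-verified Lean document; each statement's English description precedes it below -/
import Mathlib

section
/- Let m > 1/2, b > 0 and c > 1. If x > 0 satisfies I_m(x/b)/I_{m−1}(x/b) = 1/c (the mode equation of the McKay Type I distribution with parameters m, b, c), then x > b·arctanh(1/c). -/
open Real MeasureTheory

/-- Modified Bessel function of the first kind. -/
noncomputable def besselI (ν x : ℝ) : ℝ :=
  ∑' k : ℕ, (x / 2) ^ (ν + 2 * (k : ℝ)) / (Real.Gamma (ν + (k : ℝ) + 1) * (k.factorial : ℝ))

/-- The inverse hyperbolic tangent. -/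
noncomputable def arctanh (y : ℝ) : ℝ := Real.log ((1 + y) / (1 - y)) / 2

open Finset

noncomputable def Fc (m : ℝ) (k j : ℕ) : ℝ :=
  4 ^ j / (Real.Gamma (m + k + 1) * k.factorial * (2 * j).factorial)

noncomputable def Gc (m : ℝ) (k j : ℕ) : ℝ :=
  2 * 4 ^ j / (Real.Gamma (m + k) * k.factorial * (2 * j + 1).factorial)

noncomputable def Hc (m : ℝ) (k j : ℕ) : ℝ :=
  4 * k * (m + k) * 4 ^ j / (Real.Gamma (m + k + 1) * k.factorial * (2 * j + 1).factorial)

lemma idB (m : ℝ) (hm : 0 < m) (k : ℕ) :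
    2 * (m + k) * Fc m k 0 - (2 * k + 1) * Gc m k 0 = -(Hc m k 0) := by
  have hmk : (0:ℝ) < m + k := by positivity
  have hΓ : Real.Gamma (m + k + 1) = (m + k) * Real.Gamma (m + k) :=
    Real.Gamma_add_one (ne_of_gt hmk)
  have hΓ0 : 0 < Real.Gamma (m + k) := Real.Gamma_pos_of_pos hmk
  have hk0 : (0:ℝ) < (k.factorial : ℝ) := by exact_mod_cast k.factorial_pos
  unfold Fc Gc Hc
  rw [hΓ]
  norm_num [Nat.factorial]
  field_simp
  ring

lemma idA (m : ℝ) (hm : 0 < m) (k j : ℕ) :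
    2 * (m + k + j + 1) * Fc m k (j + 1) - (2 * (k + j + 1) + 1) * Gc m k (j + 1)
      = Hc m (k + 1) j - Hc m k (j + 1) := by
  have hmk : (0:ℝ) < m + k := by positivity
  have hΓ : Real.Gamma (m + k + 1) = (m + k) * Real.Gamma (m + k) :=
    Real.Gamma_add_one (ne_of_gt hmk)
  have hΓ2 : Real.Gamma (m + (k + 1 : ℕ) + 1) = (m + k + 1) * ((m + k) * Real.Gamma (m + k)) := by
    push_cast
    rw [show m + ((k:ℝ) + 1) + 1 = (m + k + 1) + 1 by ring,
      Real.Gamma_add_one (by positivity), Real.Gamma_add_one (ne_of_gt hmk)]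
  have hΓ0 : 0 < Real.Gamma (m + k) := Real.Gamma_pos_of_pos hmk
  have hk0 : (0:ℝ) < (k.factorial : ℝ) := by exact_mod_cast k.factorial_pos
  have hj0 : (0:ℝ) < ((2 * j + 1).factorial : ℝ) := by exact_mod_cast (2 * j + 1).factorial_pos
  have hf1 : ((2 * (j + 1)).factorial : ℝ) = (2 * j + 2) * ((2 * j + 1).factorial : ℝ) := by
    rw [show 2 * (j + 1) = (2 * j + 1) + 1 by ring, Nat.factorial_succ]
    push_cast; ring
  have hf2 : ((2 * (j + 1) + 1).factorial : ℝ)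
      = (2 * j + 3) * ((2 * j + 2) * ((2 * j + 1).factorial : ℝ)) := by
    rw [show 2 * (j + 1) + 1 = ((2 * j + 1) + 1) + 1 by ring, Nat.factorial_succ,
      Nat.factorial_succ]
    push_cast; ring
  have hfk : (((k + 1)).factorial : ℝ) = (k + 1) * (k.factorial : ℝ) := by
    rw [Nat.factorial_succ]; push_cast; ring
  unfold Fc Gc Hc
  rw [hΓ, hΓ2, hf1, hf2, hfk]
  push_cast
  field_simp
  ring

lemma keyId (m : ℝ) (hm : 0 < m) (n : ℕ) :
    2 * (m + n) * (∑ kl ∈ antidiagonal n, Fc m kl.1 kl.2)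
      = (2 * n + 1) * (∑ kl ∈ antidiagonal n, Gc m kl.1 kl.2) := by
  rw [Finset.Nat.sum_antidiagonal_eq_sum_range_succ_mk,
    Finset.Nat.sum_antidiagonal_eq_sum_range_succ_mk, Finset.mul_sum, Finset.mul_sum,
    ← sub_eq_zero, ← Finset.sum_sub_distrib]
  set T : ℕ → ℝ := fun k => if k ≤ n then Hc m k (n - k) else 0 with hT
  have h1 : ∑ k ∈ range (n + 1),
      (2 * (m + n) * Fc m k (n - k) - (2 * n + 1) * Gc m k (n - k))
      = ∑ k ∈ range (n + 1), (T (k + 1) - T k) := by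
    refine Finset.sum_congr rfl fun k hk => ?_
    rw [Finset.mem_range] at hk
    have hkn : k ≤ n := Nat.lt_succ_iff.mp hk
    rcases eq_or_lt_of_le hkn with he | hlt
    · subst he
      have : T (k + 1) = 0 := by simp [hT]
      rw [this, Nat.sub_self]
      have hTk : T k = Hc m k 0 := by simp [hT, Nat.sub_self]
      rw [hTk, zero_sub]
      exact idB m hm k
    · -- k < n : let j = n - k - 1
      obtain ⟨j, hj⟩ : ∃ j, n = k + j + 1 := ⟨n - k - 1, by omega⟩
      have h2 : n - k = j + 1 := by omega
      have h3 : n - (k + 1) = j := by omega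
      have hTk : T k = Hc m k (j + 1) := by simp [hT, hkn, h2]
      have hTk1 : T (k + 1) = Hc m (k + 1) j := by
        simp only [hT, h3, if_pos (by omega : k + 1 ≤ n)]
      rw [hTk, hTk1, h2]
      have hcast : (n : ℝ) = (k : ℝ) + (j : ℝ) + 1 := by exact_mod_cast congrArg Nat.cast hj
      rw [hcast, show m + ((k:ℝ) + (j:ℝ) + 1) = m + k + j + 1 from by ring]
      exact idA m hm k j
  rw [h1, Finset.sum_range_sub]
  simp [hT, Hc]

lemma sumAux (ν v : ℝ) (hν : -1 < ν) (hv : 0 ≤ v) :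
    Summable (fun k : ℕ => v ^ k / (Real.Gamma (ν + k + 1) * k.factorial)) := by
  apply summable_of_ratio_norm_eventually_le (r := 1/2) (by norm_num)
  filter_upwards [Filter.eventually_ge_atTop (⌈2 * v⌉₊ + 1)] with k hk
  have hkv : 2 * v ≤ (k : ℝ) := by
    calc 2 * v ≤ (⌈2 * v⌉₊ : ℝ) := Nat.le_ceil _
    _ ≤ (k : ℝ) := by exact_mod_cast le_trans (Nat.le_succ _) hk
  have hp : (0:ℝ) < ν + k + 1 := by
    have : (1:ℝ) ≤ (k:ℝ) := by exact_mod_cast Nat.one_le_iff_ne_zero.mpr (by omega)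
    linarith
  have hΓ0 : 0 < Real.Gamma (ν + k + 1) := Real.Gamma_pos_of_pos (by linarith)
  have hΓ2 : Real.Gamma (ν + ((k:ℕ) + 1 : ℕ) + 1) = (ν + k + 1) * Real.Gamma (ν + k + 1) := by
    push_cast
    rw [show ν + ((k:ℝ) + 1) + 1 = (ν + k + 1) + 1 by ring, Real.Gamma_add_one (ne_of_gt hp)]
  have hk0 : (0:ℝ) < (k.factorial : ℝ) := by exact_mod_cast k.factorial_pos
  have hfk : (((k:ℕ) + 1).factorial : ℝ) = ((k:ℝ) + 1) * (k.factorial : ℝ) := by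
    rw [Nat.factorial_succ]; push_cast; ring
  rw [Real.norm_eq_abs, Real.norm_eq_abs, hΓ2, hfk,
    abs_of_nonneg (by positivity), abs_of_nonneg (by positivity)]
  have hrw : (1:ℝ)/2 * (v ^ k / (Real.Gamma (ν + k + 1) * k.factorial))
      = v ^ k / (2 * (Real.Gamma (ν + k + 1) * k.factorial)) := by ring
  rw [hrw, div_le_div_iff₀ (by positivity) (by positivity), pow_succ]
  have hb : 2 * v ≤ (ν + k + 1) * ((k:ℝ) + 1) := by
    nlinarith
  have hvk : (0:ℝ) ≤ v ^ k := pow_nonneg hv k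
  nlinarith [mul_le_mul_of_nonneg_left hb (mul_nonneg (mul_nonneg hvk hΓ0.le) hk0.le)]

lemma core (m u : ℝ) (hm : 1/2 < m) (hu : 0 < u) :
    (∑' k : ℕ, (u^2)^k / (Real.Gamma (m + k + 1) * k.factorial)) * Real.cosh (2*u) * u
      < (∑' k : ℕ, (u^2)^k / (Real.Gamma (m + k) * k.factorial)) * Real.sinh (2*u) := by
  have hm0 : 0 < m := by linarith
  set s : ℕ → ℝ := fun k => (u^2)^k / (Real.Gamma (m + k + 1) * k.factorial) with hs_def
  set t : ℕ → ℝ := fun k => (u^2)^k / (Real.Gamma (m + k) * k.factorial) with ht_def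
  set c : ℕ → ℝ := fun j => (4*u^2)^j / ((2*j).factorial) with hc_def
  set σ : ℕ → ℝ := fun j => 2*u*(4*u^2)^j / ((2*j+1).factorial) with hσ_def
  have hΓ1 : ∀ k : ℕ, (0:ℝ) < Real.Gamma (m + k + 1) :=
    fun k => Real.Gamma_pos_of_pos (by positivity)
  have hΓ0 : ∀ k : ℕ, (0:ℝ) < Real.Gamma (m + k) :=
    fun k => Real.Gamma_pos_of_pos (by positivity)
  have hspos : ∀ k, 0 < s k := fun k => by
    have := hΓ1 k; have : (0:ℝ) < (k.factorial:ℝ) := by exact_mod_cast k.factorial_pos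
    simp only [hs_def]; positivity
  have htpos : ∀ k, 0 < t k := fun k => by
    have := hΓ0 k; have : (0:ℝ) < (k.factorial:ℝ) := by exact_mod_cast k.factorial_pos
    simp only [ht_def]; positivity
  have hcpos : ∀ j, 0 < c j := fun j => by
    have : (0:ℝ) < ((2*j).factorial:ℝ) := by exact_mod_cast (2*j).factorial_pos
    simp only [hc_def]; positivity
  have hσpos : ∀ j, 0 < σ j := fun j => by
    have : (0:ℝ) < ((2*j+1).factorial:ℝ) := by exact_mod_cast (2*j+1).factorial_pos
    simp only [hσ_def]; positivity
  have hs : Summable s := by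
    have := sumAux m (u^2) (by linarith) (by positivity)
    exact this.congr fun k => rfl
  have ht : Summable t := by
    have := sumAux (m-1) (u^2) (by linarith) (by positivity)
    refine this.congr fun k => ?_
    simp only [ht_def, show m - 1 + (k:ℝ) + 1 = m + k by ring]
  have hc : Summable c := by
    have h0 := (Real.summable_pow_div_factorial (2*u)).comp_injective
      (f := fun n : ℕ => (2*u)^n / n.factorial) (i := fun j : ℕ => 2*j)
      (fun a b h => by simp only at h; omega)
    refine h0.congr fun j => ?_
    simp only [Function.comp, hc_def, pow_mul, show (2*u)^2 = 4*u^2 by ring]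
  have hσ : Summable σ := by
    have h0 := (Real.summable_pow_div_factorial (2*u)).comp_injective
      (f := fun n : ℕ => (2*u)^n / n.factorial) (i := fun j : ℕ => 2*j+1)
      (fun a b h => by simp only at h; omega)
    refine h0.congr fun j => ?_
    simp only [Function.comp, hσ_def]
    rw [pow_succ, pow_mul, show (2*u)^2 = 4*u^2 by ring]
    ring
  have hcosh : Real.cosh (2*u) = ∑' j, c j := by
    rw [Real.cosh_eq_tsum]
    exact tsum_congr fun j => by
      simp only [hc_def]; rw [pow_mul, show (2*u)^2 = 4*u^2 by ring]
  have hsinh : Real.sinh (2*u) = ∑' j, σ j := by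
    rw [Real.sinh_eq_tsum]
    refine tsum_congr fun j => ?_
    simp only [hσ_def]
    rw [pow_succ, pow_mul, show (2*u)^2 = 4*u^2 by ring]
    ring
  have hsn : Summable fun k => ‖s k‖ := by
    simpa [Real.norm_eq_abs] using hs.abs
  have htn : Summable fun k => ‖t k‖ := by simpa [Real.norm_eq_abs] using ht.abs
  have hcn : Summable fun j => ‖c j‖ := by simpa [Real.norm_eq_abs] using hc.abs
  have hσn : Summable fun j => ‖σ j‖ := by simpa [Real.norm_eq_abs] using hσ.abs
  have cauchy1 : (∑' k, s k) * Real.cosh (2*u)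
      = ∑' n : ℕ, ∑ kl ∈ antidiagonal n, s kl.1 * c kl.2 := by
    rw [hcosh]
    exact tsum_mul_tsum_eq_tsum_sum_antidiagonal_of_summable_norm hsn hcn
  have cauchy2 : (∑' k, t k) * Real.sinh (2*u)
      = ∑' n : ℕ, ∑ kl ∈ antidiagonal n, t kl.1 * σ kl.2 := by
    rw [hsinh]
    exact tsum_mul_tsum_eq_tsum_sum_antidiagonal_of_summable_norm htn hσn
  have e1 : ∀ n : ℕ, ∑ kl ∈ antidiagonal n, s kl.1 * c kl.2
      = (u^2)^n * ∑ kl ∈ antidiagonal n, Fc m kl.1 kl.2 := by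
    intro n
    rw [Finset.mul_sum]
    refine Finset.sum_congr rfl fun kl hkl => ?_
    have hn : kl.1 + kl.2 = n := (Finset.HasAntidiagonal.mem_antidiagonal).mp hkl
    simp only [hs_def, hc_def, Fc]
    rw [← hn, mul_pow, pow_add]
    ring
  have e2 : ∀ n : ℕ, ∑ kl ∈ antidiagonal n, t kl.1 * σ kl.2
      = u * ((u^2)^n * ∑ kl ∈ antidiagonal n, Gc m kl.1 kl.2) := by
    intro n
    rw [Finset.mul_sum, Finset.mul_sum]
    refine Finset.sum_congr rfl fun kl hkl => ?_
    have hn : kl.1 + kl.2 = n := (Finset.HasAntidiagonal.mem_antidiagonal).mp hkl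
    simp only [ht_def, hσ_def, Gc]
    rw [← hn, mul_pow, pow_add]
    ring
  have hFpos : ∀ n : ℕ, 0 < ∑ kl ∈ antidiagonal n, Fc m kl.1 kl.2 := by
    intro n
    refine Finset.sum_pos (fun kl _ => ?_) ⟨(0, n), (Finset.HasAntidiagonal.mem_antidiagonal).mpr (by simp)⟩
    have h1 := hΓ1 kl.1
    have h2 : (0:ℝ) < (kl.1.factorial:ℝ) := by exact_mod_cast kl.1.factorial_pos
    have h3 : (0:ℝ) < ((2*kl.2).factorial:ℝ) := by exact_mod_cast (2*kl.2).factorial_pos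
    unfold Fc
    positivity
  have pointwise : ∀ n : ℕ, (∑ kl ∈ antidiagonal n, s kl.1 * c kl.2) * u
      < ∑ kl ∈ antidiagonal n, t kl.1 * σ kl.2 := by
    intro n
    rw [e1 n, e2 n]
    have hkey := keyId m hm0 n
    have hF := hFpos n
    have hn0 : (0:ℝ) ≤ (n:ℝ) := Nat.cast_nonneg n
    have hupow : (0:ℝ) < u * (u^2)^n := by positivity
    have hFG : (∑ kl ∈ antidiagonal n, Fc m kl.1 kl.2)
        < ∑ kl ∈ antidiagonal n, Gc m kl.1 kl.2 := by nlinarith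
    nlinarith
  have hg : Summable (fun n : ℕ => ∑ kl ∈ antidiagonal n, t kl.1 * σ kl.2) :=
    (summable_norm_sum_mul_antidiagonal_of_summable_norm htn hσn).of_norm
  rw [cauchy1, cauchy2, ← tsum_mul_right]
  refine Summable.tsum_lt_tsum_of_nonneg (fun n => ?_) (fun n => (pointwise n).le) (pointwise 0) hg
  exact mul_nonneg (Finset.sum_nonneg fun kl _ => mul_nonneg (hspos kl.1).le (hcpos kl.2).le) hu.le

theorem stmt_17 (m b c : ℝ) (hm : 1 / 2 < m) (hb : 0 < b) (hc : 1 < c) (x : ℝ) (hx : 0 < x)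
    (hmode : besselI m (x / b) / besselI (m - 1) (x / b) = 1 / c) :
    x > b * arctanh (1 / c) := by
  have ht : 0 < x / b := div_pos hx hb
  set u : ℝ := x / b / 2 with hu_def
  have hu : 0 < u := by positivity
  have h2u : 2 * u = x / b := by rw [hu_def]; ring
  have hrw : ∀ ν : ℝ, besselI ν (x / b)
      = u ^ ν * ∑' k : ℕ, (u ^ 2) ^ k / (Real.Gamma (ν + k + 1) * k.factorial) := by
    intro ν
    unfold besselI
    rw [← tsum_mul_left]
    refine tsum_congr fun k => ?_
    rw [show x / b / 2 = u from rfl, Real.rpow_add hu,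
      show (2 * (k:ℝ)) = ((2 * k : ℕ) : ℝ) by push_cast; ring, Real.rpow_natCast,
      pow_mul, mul_div_assoc]
  set S1 : ℝ := ∑' k : ℕ, (u ^ 2) ^ k / (Real.Gamma (m + k + 1) * k.factorial) with hS1_def
  set S0 : ℝ := ∑' k : ℕ, (u ^ 2) ^ k / (Real.Gamma (m + k) * k.factorial) with hS0_def
  have hB : besselI m (x / b) = u ^ (m : ℝ) * S1 := hrw m
  have hA : besselI (m - 1) (x / b) = u ^ (m - 1 : ℝ) * S0 := by
    rw [hrw (m - 1), hS0_def]
    congr 1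
    exact tsum_congr fun k => by rw [show m - 1 + (k:ℝ) + 1 = m + k by ring]
  have hS0sum : Summable (fun k : ℕ => (u ^ 2) ^ k / (Real.Gamma (m + k) * k.factorial)) := by
    have := sumAux (m - 1) (u ^ 2) (by linarith) (by positivity)
    exact this.congr fun k => by rw [show m - 1 + (k:ℝ) + 1 = m + k by ring]
  have hS0pos : 0 < S0 := by
    refine Summable.tsum_pos hS0sum (fun k => ?_) 0 ?_
    · have h1 : (0:ℝ) < Real.Gamma (m + k) := Real.Gamma_pos_of_pos (by positivity)
      have h2 : (0:ℝ) < (k.factorial : ℝ) := by exact_mod_cast k.factorial_pos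
      positivity
    · have h1 : (0:ℝ) < Real.Gamma (m + (0:ℕ)) := Real.Gamma_pos_of_pos (by norm_num; linarith)
      have h2 : (0:ℝ) < ((0:ℕ).factorial : ℝ) := by norm_num
      positivity
  have hApos : 0 < besselI (m - 1) (x / b) := by
    rw [hA]
    exact mul_pos (Real.rpow_pos_of_pos hu _) hS0pos
  have hc0 : (0:ℝ) < c := by linarith
  have hBA : c * besselI m (x / b) = besselI (m - 1) (x / b) := by
    rw [div_eq_div_iff hApos.ne' hc0.ne'] at hmode
    linarith
  -- main analytic inequality
  have hcore := core m u hm hu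
  have hum : u ^ (m : ℝ) = u ^ (m - 1 : ℝ) * u := by
    have h := (Real.rpow_add hu (m - 1) 1).symm
    rw [Real.rpow_one, show m - 1 + 1 = m by ring] at h
    exact h.symm
  have hmain : besselI m (x / b) * Real.cosh (x / b)
      < besselI (m - 1) (x / b) * Real.sinh (x / b) := by
    rw [hB, hA, ← h2u, hum]
    have := mul_lt_mul_of_pos_left hcore (Real.rpow_pos_of_pos hu (m - 1))
    nlinarith [this]
  have hcoshpos : 0 < Real.cosh (x / b) := Real.cosh_pos _
  have hcs : Real.cosh (x / b) < c * Real.sinh (x / b) := by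
    have h1 := mul_lt_mul_of_pos_left hmain hc0
    rw [← mul_assoc, hBA] at h1
    have h2 : besselI (m - 1) (x / b) * Real.cosh (x / b)
        < besselI (m - 1) (x / b) * (c * Real.sinh (x / b)) := by
      calc besselI (m - 1) (x / b) * Real.cosh (x / b)
          < c * (besselI (m - 1) (x / b) * Real.sinh (x / b)) := h1
        _ = besselI (m - 1) (x / b) * (c * Real.sinh (x / b)) := by ring
    exact lt_of_mul_lt_mul_left h2 hApos.le
  -- convert to exponential inequality
  set E : ℝ := Real.exp (x / b) with hE_def
  have hEpos : 0 < E := Real.exp_pos _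
  have hEinv : Real.exp (-(x / b)) = E⁻¹ := by rw [Real.exp_neg]
  have hexp : E * E⁻¹ = 1 := mul_inv_cancel₀ hEpos.ne'
  rw [Real.cosh_eq, Real.sinh_eq, hEinv] at hcs
  -- final arctanh computation
  have h1c : 0 < 1 - 1 / c := by
    have : 1 / c < 1 := by rw [div_lt_one hc0]; exact hc
    linarith
  have h1c' : (0:ℝ) < (1 + 1 / c) / (1 - 1 / c) := by
    have : (0:ℝ) < 1 + 1 / c := by positivity
    positivity
  have harct : arctanh (1 / c) < x / b := by
    unfold arctanh
    rw [div_lt_iff₀ (by norm_num : (0:ℝ) < 2), Real.log_lt_iff_lt_exp h1c',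
      show x / b * 2 = x / b + x / b by ring, Real.exp_add, ← hE_def,
      div_lt_iff₀ h1c]
    have hE0 : E ≠ 0 := hEpos.ne'
    have h3 := mul_lt_mul_of_pos_left hcs hEpos
    have l1 : E * ((Real.exp (x/b) + E⁻¹) / 2) = (E * E + 1) / 2 := by
      rw [← hE_def]; field_simp
    have l2 : E * (c * ((Real.exp (x/b) - E⁻¹) / 2)) = (c * (E * E) - c) / 2 := by
      rw [← hE_def]; field_simp
    rw [l1, l2] at h3
    have h5 : c + 1 < c * (E * E) - E * E := by linarith
    have hinvpos : (0:ℝ) < 1 / c := by positivity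
    have h6 := mul_lt_mul_of_pos_right h5 hinvpos
    have e1 : (c + 1) * (1 / c) = 1 + 1 / c := by field_simp
    have e2 : (c * (E * E) - E * E) * (1 / c) = E * E * (1 - 1 / c) := by field_simp
    rw [e1, e2] at h6
    exact h6
  calc b * arctanh (1 / c) < b * (x / b) := (mul_lt_mul_iff_right₀ hb).mpr harct
    _ = x := by field_simp
end

section
/- Fix λ > 1, θ > 0 and δ = 0, and let M : (0, ∞) → ℝ be a function such that for every σ > 0, M(σ) satisfies (√(θ² + σ²)/θ) · K_{λ−3/2}((√(θ² + σ²)/σ²)·M(σ)) / K_{λ−1/2}((√(θ² + σ²)/σ²)·M(σ)) = 1 (i.e. M(σ) is the mode of the variance-gamma distribution VG(2λ, θ, σ, 0)). Then M(σ) → 2θ(λ − 1) as σ → 0⁺. -/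
open Real MeasureTheory Set Filter Topology

/-- Modified Bessel function of the second kind. -/
noncomputable def besselK (ν x : ℝ) : ℝ :=
  ∫ t in Set.Ioi (0:ℝ), Real.exp (-x * Real.cosh t) * Real.cosh (ν * t)



namespace BKaux

lemma cosh_sub_one (t : ℝ) : Real.cosh t - 1 = 2 * Real.sinh (t/2)^2 := by
  have h2 : 2 * (t/2) = t := by ring
  have := Real.cosh_two_mul (t/2)
  rw [h2] at this
  rw [this, Real.cosh_sq]; ring

lemma half_sq_le_cosh_sub_one (t : ℝ) : t^2/2 ≤ Real.cosh t - 1 := by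
  rw [cosh_sub_one]
  have h : |t/2| ≤ |Real.sinh (t/2)| := by
    rw [Real.abs_sinh]; exact Real.self_le_sinh_iff.2 (abs_nonneg _)
  have h2 : (t/2)^2 ≤ Real.sinh (t/2)^2 := by
    rw [← sq_abs (t/2), ← sq_abs (Real.sinh (t/2))]
    exact pow_le_pow_left₀ (abs_nonneg _) h 2
  nlinarith

lemma cosh_le_exp_abs (t : ℝ) : Real.cosh t ≤ Real.exp |t| := by
  rw [Real.cosh_eq]
  have h1 : Real.exp t ≤ Real.exp |t| := Real.exp_le_exp.2 (le_abs_self t)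
  have h2 : Real.exp (-t) ≤ Real.exp |t| := Real.exp_le_exp.2 (neg_le_abs t)
  linarith

lemma sinh_le_mul_cosh {x : ℝ} (hx : 0 ≤ x) : Real.sinh x ≤ x * Real.cosh x := by
  have hder : ∀ y : ℝ, HasDerivAt (fun z : ℝ => z * Real.cosh z - Real.sinh z)
      (y * Real.sinh y) y := by
    intro y
    have h := ((hasDerivAt_id y).mul (Real.hasDerivAt_cosh y)).sub (Real.hasDerivAt_sinh y)
    rw [show y * Real.sinh y = 1 * Real.cosh y + id y * Real.sinh y - Real.cosh y by
      rw [id_eq]; ring]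
    exact h
  have key : MonotoneOn (fun z : ℝ => z * Real.cosh z - Real.sinh z) (Ici (0:ℝ)) := by
    apply monotoneOn_of_deriv_nonneg (convex_Ici 0)
    · exact ((continuous_id.mul Real.continuous_cosh).sub Real.continuous_sinh).continuousOn
    · intro y _; exact (hder y).differentiableAt.differentiableWithinAt
    · intro y hy
      rw [interior_Ici, mem_Ioi] at hy
      rw [(hder y).deriv]
      exact mul_nonneg hy.le (Real.sinh_nonneg_iff.2 hy.le)
  have := key (self_mem_Ici) (mem_Ici.2 hx) hx
  simp at this
  linarith

lemma cosh_sub_one_le (a : ℝ) : Real.cosh a - 1 ≤ a^2/2 * Real.cosh a := by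
  rw [cosh_sub_one]
  have habs : Real.sinh (a/2)^2 = Real.sinh (|a|/2)^2 := by
    rcases abs_cases a with ⟨h, _⟩ | ⟨h, _⟩
    · rw [h]
    · rw [h, show (-a)/2 = -(a/2) by ring, Real.sinh_neg]; ring
  have h1 : Real.sinh (|a|/2) ≤ (|a|/2) * Real.cosh (|a|/2) :=
    sinh_le_mul_cosh (by positivity)
  have h2 : (0:ℝ) ≤ Real.sinh (|a|/2) := Real.sinh_nonneg_iff.2 (by positivity)
  have h3 : Real.cosh (|a|/2)^2 ≤ Real.cosh a := by
    have h2' : 2*(|a|/2) = |a| := by ring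
    have := Real.cosh_two_mul (|a|/2)
    rw [h2'] at this
    rw [← Real.cosh_abs a]
    nlinarith [sq_nonneg (Real.sinh (|a|/2))]
  have h4 : a^2 = |a|^2 := (sq_abs a).symm
  rw [habs, h4]
  nlinarith [Real.cosh_pos (|a|/2), sq_nonneg (|a|/2), abs_nonneg a]

lemma besselK_integrandCont (ρ x : ℝ) :
    Continuous (fun t => Real.exp (-x * Real.cosh t) * Real.cosh (ρ * t)) := by
  fun_prop

lemma besselK_integrableOn (ρ : ℝ) {x : ℝ} (hx : 0 < x) :
    IntegrableOn (fun t => Real.exp (-x * Real.cosh t) * Real.cosh (ρ * t)) (Ioi 0) := by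
  set a : ℝ := |ρ| + 1 with ha
  have ha1 : 0 < a := by positivity
  apply Integrable.mono' (g := fun t => Real.exp (a^2/x - x) * Real.exp (-t))
  · have := (exp_neg_integrableOn_Ioi 0 one_pos).const_mul (Real.exp (a^2/x - x))
    simpa [neg_one_mul] using this
  · exact (besselK_integrandCont ρ x).aestronglyMeasurable
  · filter_upwards [ae_restrict_mem measurableSet_Ioi] with t ht
    rw [mem_Ioi] at ht
    have hnn : 0 ≤ Real.exp (-x * Real.cosh t) * Real.cosh (ρ * t) :=
      mul_nonneg (Real.exp_pos _).le (by linarith [Real.one_le_cosh (ρ*t)])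
    rw [Real.norm_eq_abs, abs_of_nonneg hnn]
    have h1 : Real.cosh (ρ * t) ≤ Real.exp (|ρ| * t) := by
      have := cosh_le_exp_abs (ρ * t)
      rwa [abs_mul, abs_of_pos ht] at this
    have h2 : Real.exp (-x * Real.cosh t) * Real.cosh (ρ*t)
        ≤ Real.exp (|ρ| * t - x * Real.cosh t) := by
      calc Real.exp (-x * Real.cosh t) * Real.cosh (ρ*t)
          ≤ Real.exp (-x * Real.cosh t) * Real.exp (|ρ| * t) :=
            mul_le_mul_of_nonneg_left h1 (Real.exp_pos _).le
        _ = Real.exp (|ρ| * t - x * Real.cosh t) := by rw [← Real.exp_add]; ring_nf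
    refine h2.trans ?_
    rw [← Real.exp_add]
    apply Real.exp_le_exp.2
    have h3 : t^2/2 + 1 ≤ Real.cosh t := by linarith [half_sq_le_cosh_sub_one t]
    have key : a * t - x * (t^2/2) ≤ a^2/x := by
      rw [le_div_iff₀ hx]
      nlinarith [sq_nonneg (a - x*t), sq_nonneg a, sq_nonneg (x*t), mul_pos hx ht]
    have h7 : x * (t^2/2) + x ≤ x * Real.cosh t := by nlinarith
    nlinarith



end BKaux

namespace BKaux

lemma integrand_nonneg (ρ x t : ℝ) :
    0 ≤ Real.exp (-x * Real.cosh t) * Real.cosh (ρ * t) :=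
  mul_nonneg (Real.exp_pos _).le (by linarith [Real.one_le_cosh (ρ*t)])

/-- lower bound of besselK by integral over Ioc a b with a constant. -/
lemma besselK_ge_aux (ρ : ℝ) {x a b c : ℝ} (hx : 0 < x) (ha : 0 ≤ a) (hab : a < b)
    (hc : ∀ t ∈ Ioc a b, c ≤ Real.exp (-x * Real.cosh t) * Real.cosh (ρ * t)) :
    c * (b - a) ≤ besselK ρ x := by
  have hsub : Ioc a b ⊆ Ioi 0 := fun t ht => lt_of_le_of_lt ha ht.1
  have h1 : c * (volume (Ioc a b)).toReal ≤
      ∫ t in Ioc a b, Real.exp (-x * Real.cosh t) * Real.cosh (ρ * t) :=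
    setIntegral_ge_of_const_le_real measurableSet_Ioc (measure_Ioc_lt_top).ne hc
      ((besselK_integrableOn ρ hx).mono_set hsub)
  have h2 : (∫ t in Ioc a b, Real.exp (-x * Real.cosh t) * Real.cosh (ρ * t))
      ≤ besselK ρ x := by
    apply setIntegral_mono_set (besselK_integrableOn ρ hx)
    · filter_upwards [ae_restrict_mem measurableSet_Ioi] with t _
      exact integrand_nonneg ρ x t
    · exact HasSubset.Subset.eventuallyLE hsub
  rw [Real.volume_Ioc, ENNReal.toReal_ofReal (by linarith)] at h1
  exact h1.trans h2

lemma besselK_pos (ρ : ℝ) {x : ℝ} (hx : 0 < x) : 0 < besselK ρ x := by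
  have := besselK_ge_aux ρ (a := 0) (b := 1) (c := Real.exp (-x * Real.cosh 1)) hx le_rfl
    one_pos (fun t ht => by
      have h1 : Real.cosh t ≤ Real.cosh 1 := by
        rw [Real.cosh_le_cosh]
        rw [abs_of_pos ht.1, abs_one]; exact ht.2
      have h2 : Real.exp (-x * Real.cosh t) ≥ Real.exp (-x * Real.cosh 1) :=
        Real.exp_le_exp.2 (by nlinarith)
      calc Real.exp (-x * Real.cosh 1) ≤ Real.exp (-x * Real.cosh t) := h2
        _ ≤ _ := le_mul_of_one_le_right (Real.exp_pos _).le (Real.one_le_cosh _))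
  calc (0:ℝ) < Real.exp (-x * Real.cosh 1) * (1 - 0) := by positivity
    _ ≤ besselK ρ x := this

lemma besselK_anti (ρ : ℝ) {x y : ℝ} (hx : 0 < x) (hxy : x ≤ y) :
    besselK ρ y ≤ besselK ρ x := by
  apply setIntegral_mono_on (besselK_integrableOn ρ (hx.trans_le hxy))
    (besselK_integrableOn ρ hx) measurableSet_Ioi
  intro t _
  have h := Real.one_le_cosh t
  have : Real.exp (-y * Real.cosh t) ≤ Real.exp (-x * Real.cosh t) :=
    Real.exp_le_exp.2 (by nlinarith)
  exact mul_le_mul_of_nonneg_right this (by linarith [Real.one_le_cosh (ρ*t)])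

section gap
variable {ν μ : ℝ} (hν : 0 < ν) (hμν : |μ| < ν)

lemma cosh_mu_le_cosh_nu (hμν : |μ| < ν) {t : ℝ} (ht : 0 ≤ t) :
    Real.cosh (μ * t) ≤ Real.cosh (ν * t) := by
  rw [Real.cosh_le_cosh, abs_mul, abs_mul, abs_of_nonneg ht]
  exact mul_le_mul_of_nonneg_right (le_of_lt (by rwa [abs_of_pos (lt_of_le_of_lt (abs_nonneg μ) hμν)] )) ht

include hν hμν in
lemma cosh_tail (t : ℝ) (ht : Real.log 4 / (ν - |μ|) ≤ t) :
    Real.cosh (μ * t) ≤ 1/2 * Real.cosh (ν * t) := by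
  have hd : 0 < ν - |μ| := by linarith
  have hlog : 0 < Real.log 4 := Real.log_pos (by norm_num)
  have ht0 : 0 < t := lt_of_lt_of_le (by positivity) ht
  have h1 : Real.cosh (μ * t) ≤ Real.exp (|μ| * t) := by
    have := cosh_le_exp_abs (μ * t)
    rwa [abs_mul, abs_of_pos ht0] at this
  have h2 : Real.exp (ν * t) / 2 ≤ Real.cosh (ν * t) := by
    rw [Real.cosh_eq]
    have := (Real.exp_pos (-(ν*t))).le
    rw [show -(ν*t) = -ν*t by ring] at this; linarith [Real.exp_pos (-(ν * t))]
  have h3 : Real.log 4 ≤ (ν - |μ|) * t := by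
    rw [div_le_iff₀ hd] at ht; linarith [ht]
  have h4 : Real.exp (|μ| * t) ≤ Real.exp (ν * t) / 4 := by
    rw [div_eq_mul_inv, ← Real.exp_log (show (0:ℝ) < 4 by norm_num), ← Real.exp_neg,
      ← Real.exp_add]
    apply Real.exp_le_exp.2; linarith
  linarith

end gap
end BKaux

namespace BKaux
section gap2
variable {ν μ : ℝ}

/-- split bound -/
lemma besselK_split (hν : 0 < ν) (hμν : |μ| < ν) {y : ℝ} (hy : 0 < y) :
    besselK μ y ≤ 1/2 * besselK ν y
      + (Real.log 4 / (ν - |μ|)) * Real.cosh (ν * (Real.log 4 / (ν - |μ|))) := by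
  set t₀ : ℝ := Real.log 4 / (ν - |μ|) with ht₀def
  have hd : 0 < ν - |μ| := by linarith
  have ht₀ : 0 < t₀ := div_pos (Real.log_pos (by norm_num)) hd
  have hsub1 : Ioc (0:ℝ) t₀ ⊆ Ioi 0 := fun t ht => ht.1
  have hsub2 : Ioi t₀ ⊆ Ioi (0:ℝ) := Ioi_subset_Ioi ht₀.le
  have int1 := (besselK_integrableOn μ hy).mono_set hsub1
  have int2 := (besselK_integrableOn μ hy).mono_set hsub2
  have hsplit : besselK μ y =
      (∫ t in Ioc 0 t₀, Real.exp (-y * Real.cosh t) * Real.cosh (μ * t))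
      + ∫ t in Ioi t₀, Real.exp (-y * Real.cosh t) * Real.cosh (μ * t) := by
    rw [besselK, show Ioi (0:ℝ) = Ioc 0 t₀ ∪ Ioi t₀ from (Ioc_union_Ioi_eq_Ioi ht₀.le).symm,
      setIntegral_union Ioc_disjoint_Ioi_same measurableSet_Ioi int1 int2]
  have hb1 : (∫ t in Ioc 0 t₀, Real.exp (-y * Real.cosh t) * Real.cosh (μ * t))
      ≤ Real.cosh (ν * t₀) * t₀ := by
    have := norm_setIntegral_le_of_norm_le_const (μ := volume)
      (s := Ioc (0:ℝ) t₀) (C := Real.cosh (ν * t₀))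
      (f := fun t => Real.exp (-y * Real.cosh t) * Real.cosh (μ * t))
      (measure_Ioc_lt_top) ?_
    · rw [measureReal_def, Real.volume_Ioc] at this
      have h2 : ((ENNReal.ofReal (t₀ - 0))).toReal = t₀ := by
        rw [ENNReal.toReal_ofReal (by linarith)]; ring
      rw [h2] at this
      rw [Real.norm_eq_abs] at this
      exact (le_abs_self _).trans this
    · intro t ht
      rw [Real.norm_eq_abs, abs_of_nonneg (integrand_nonneg μ y t)]
      have h3 : Real.cosh (μ * t) ≤ Real.cosh (ν * t₀) := by
        rw [Real.cosh_le_cosh, abs_mul, abs_mul, abs_of_pos ht.1,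
          abs_of_pos ht₀, abs_of_pos hν]
        exact mul_le_mul (le_of_lt hμν) ht.2 ht.1.le hν.le
      have h4 : Real.exp (-y * Real.cosh t) ≤ 1 := by
        apply Real.exp_le_one_iff.2
        nlinarith [Real.one_le_cosh t]
      nlinarith [integrand_nonneg μ y t, Real.cosh_pos (ν * t₀), Real.one_le_cosh (μ*t)]
  have hb2 : (∫ t in Ioi t₀, Real.exp (-y * Real.cosh t) * Real.cosh (μ * t))
      ≤ 1/2 * besselK ν y := by
    have step1 : (∫ t in Ioi t₀, Real.exp (-y * Real.cosh t) * Real.cosh (μ * t))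
        ≤ ∫ t in Ioi t₀, 1/2 * (Real.exp (-y * Real.cosh t) * Real.cosh (ν * t)) := by
      apply setIntegral_mono_on int2
        (((besselK_integrableOn ν hy).mono_set hsub2).const_mul _) measurableSet_Ioi
      intro t ht
      have := cosh_tail hν hμν t (le_of_lt ht)
      nlinarith [Real.exp_pos (-y * Real.cosh t)]
    refine step1.trans ?_
    rw [integral_const_mul]
    have : (∫ t in Ioi t₀, Real.exp (-y * Real.cosh t) * Real.cosh (ν * t))
        ≤ besselK ν y := by
      apply setIntegral_mono_set (besselK_integrableOn ν hy)
      · filter_upwards [ae_restrict_mem measurableSet_Ioi] with t _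
        exact integrand_nonneg ν y t
      · exact HasSubset.Subset.eventuallyLE hsub2
    linarith
  rw [hsplit]
  have : Real.cosh (ν * t₀) * t₀ = t₀ * Real.cosh (ν * t₀) := by ring
  linarith [hb1, hb2]

end gap2
end BKaux

namespace BKaux
section gap3
variable {ν μ : ℝ}

set_option maxHeartbeats 2000000 in
lemma besselK_gap (hν : 0 < ν) (hμν : |μ| < ν) {Y : ℝ} (hY : 0 < Y) :
    ∃ ε : ℝ, 0 < ε ∧ ∀ y : ℝ, 0 < y → y ≤ Y →
      besselK μ y ≤ (1 - ε) * besselK ν y := by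
  have hd : 0 < ν - |μ| := by linarith
  set t₀ : ℝ := Real.log 4 / (ν - |μ|) with ht₀def
  have ht₀ : 0 < t₀ := div_pos (Real.log_pos (by norm_num)) hd
  set C : ℝ := t₀ * Real.cosh (ν * t₀) with hCdef
  have hC : 0 < C := mul_pos ht₀ (Real.cosh_pos _)
  set T : ℝ := 8 * C + 1 with hTdef
  have hT : 0 < T := by positivity
  set y₁ : ℝ := min (Real.log 2 / Real.cosh T) Y with hy₁def
  have hy₁ : 0 < y₁ :=
    lt_min (div_pos (Real.log_pos (by norm_num)) (Real.cosh_pos _)) hY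
  set m : ℝ := 1/2 * Real.exp (-Y * Real.cosh (t₀ + 1)) with hmdef
  have hm : 0 < m := by positivity
  set ε₂ : ℝ := m / besselK ν y₁ with hε₂def
  have hKy₁ : 0 < besselK ν y₁ := besselK_pos ν hy₁
  have hε₂ : 0 < ε₂ := div_pos hm hKy₁
  refine ⟨min (1/4) ε₂, lt_min (by norm_num) hε₂, ?_⟩
  intro y hy hyY
  have hKν : 0 < besselK ν y := besselK_pos ν hy
  have hεle : min (1/4) ε₂ ≤ 1/4 := min_le_left _ _
  rcases le_or_gt y y₁ with hcase | hcase
  · -- small y : besselK ν y ≥ 4 C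
    have hlow : Real.exp (-y * Real.cosh T) * (T - 0) ≤ besselK ν y := by
      apply besselK_ge_aux ν hy le_rfl hT
      intro t ht
      have h1 : Real.cosh t ≤ Real.cosh T := by
        rw [Real.cosh_le_cosh, abs_of_pos ht.1, abs_of_pos hT]; exact ht.2
      have h2 : Real.exp (-y * Real.cosh t) ≥ Real.exp (-y * Real.cosh T) :=
        Real.exp_le_exp.2 (by nlinarith)
      calc Real.exp (-y * Real.cosh T) ≤ Real.exp (-y * Real.cosh t) := h2
        _ ≤ _ := le_mul_of_one_le_right (Real.exp_pos _).le (Real.one_le_cosh _)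
    have hexp : (1:ℝ)/2 ≤ Real.exp (-y * Real.cosh T) := by
      have h3 : y * Real.cosh T ≤ Real.log 2 := by
        have h4 : y ≤ Real.log 2 / Real.cosh T := hcase.trans (min_le_left _ _)
        rw [le_div_iff₀ (Real.cosh_pos T)] at h4; linarith
      calc (1:ℝ)/2 = Real.exp (-Real.log 2) := by
            rw [Real.exp_neg, Real.exp_log]; norm_num; norm_num
        _ ≤ _ := Real.exp_le_exp.2 (by linarith)
    have hKbig : 4 * C ≤ besselK ν y := by
      have : (1/2) * T ≤ besselK ν y := by
        calc (1/2) * T ≤ Real.exp (-y * Real.cosh T) * T := by nlinarith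
          _ = Real.exp (-y * Real.cosh T) * (T - 0) := by ring
          _ ≤ _ := hlow
      rw [hTdef] at this; linarith
    have hsplit := besselK_split hν hμν hy
    rw [← ht₀def, ← hCdef] at hsplit
    have : besselK μ y ≤ (3/4) * besselK ν y := by linarith
    refine this.trans ?_
    have : (1:ℝ) - min (1/4) ε₂ ≥ 3/4 := by linarith
    nlinarith
  · -- medium y : y₁ < y ≤ Y
    have hdiff : m ≤ besselK ν y - besselK μ y := by
      have hint : besselK ν y - besselK μ y = ∫ t in Ioi (0:ℝ),
          (Real.exp (-y * Real.cosh t) * Real.cosh (ν * t)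
            - Real.exp (-y * Real.cosh t) * Real.cosh (μ * t)) := by
        rw [besselK, besselK, ← integral_sub (besselK_integrableOn ν hy)
          (besselK_integrableOn μ hy)]
      rw [hint]
      have hsub : Ioc t₀ (t₀+1) ⊆ Ioi (0:ℝ) := fun t ht => lt_trans ht₀ ht.1
      have hInt : IntegrableOn (fun t : ℝ => Real.exp (-y * Real.cosh t) * Real.cosh (ν * t)
          - Real.exp (-y * Real.cosh t) * Real.cosh (μ * t)) (Ioi (0:ℝ)) :=
        (besselK_integrableOn ν hy).sub (besselK_integrableOn μ hy)
      have step1 : (∫ t in Ioc t₀ (t₀+1),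
          (Real.exp (-y * Real.cosh t) * Real.cosh (ν * t)
            - Real.exp (-y * Real.cosh t) * Real.cosh (μ * t))) ≤ ∫ t in Ioi (0:ℝ),
          (Real.exp (-y * Real.cosh t) * Real.cosh (ν * t)
            - Real.exp (-y * Real.cosh t) * Real.cosh (μ * t)) := by
        apply setIntegral_mono_set hInt
        · filter_upwards [ae_restrict_mem measurableSet_Ioi] with t ht
          have h5 : Real.cosh (μ * t) ≤ Real.cosh (ν * t) :=
            cosh_mu_le_cosh_nu hμν (le_of_lt ht)
          have := (Real.exp_pos (-y * Real.cosh t)).le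
          simp only [Pi.zero_apply, Pi.sub_apply]
          nlinarith
        · exact HasSubset.Subset.eventuallyLE hsub
      refine le_trans ?_ step1
      have step2 : m * (volume (Ioc t₀ (t₀+1))).toReal ≤ ∫ t in Ioc t₀ (t₀+1),
          (Real.exp (-y * Real.cosh t) * Real.cosh (ν * t)
            - Real.exp (-y * Real.cosh t) * Real.cosh (μ * t)) := by
        apply setIntegral_ge_of_const_le_real measurableSet_Ioc measure_Ioc_lt_top.ne
        · intro t ht
          have htail := cosh_tail hν hμν t ht.1.le
          have hcosh1 : Real.cosh t ≤ Real.cosh (t₀ + 1) := by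
            rw [Real.cosh_le_cosh, abs_of_pos (lt_trans ht₀ ht.1),
              abs_of_pos (by linarith : (0:ℝ) < t₀ + 1)]
            exact ht.2
          have hexp2 : Real.exp (-Y * Real.cosh (t₀+1)) ≤ Real.exp (-y * Real.cosh t) := by
            apply Real.exp_le_exp.2
            nlinarith [Real.cosh_pos t, Real.cosh_pos (t₀+1)]
          have hcν := Real.one_le_cosh (ν * t)
          have := Real.exp_pos (-y * Real.cosh t)
          rw [hmdef]
          nlinarith
        · exact hInt.mono_set hsub
      calc m = m * (volume (Ioc t₀ (t₀+1))).toReal := by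
            rw [Real.volume_Ioc, ENNReal.toReal_ofReal (by linarith)]; ring
        _ ≤ _ := step2
    have hmono : besselK ν y ≤ besselK ν y₁ := besselK_anti ν hy₁ hcase.le
    have key : ε₂ * besselK ν y ≤ besselK ν y - besselK μ y := by
      have h6 : ε₂ * besselK ν y ≤ ε₂ * besselK ν y₁ :=
        mul_le_mul_of_nonneg_left hmono hε₂.le
      have h7 : ε₂ * besselK ν y₁ = m := by
        rw [hε₂def]; field_simp
      linarith
    have h8 : min (1/4) ε₂ * besselK ν y ≤ ε₂ * besselK ν y :=
      mul_le_mul_of_nonneg_right (min_le_right _ _) hKν.le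
    nlinarith [h8, key]

end gap3
end BKaux


namespace BKaux

lemma tendsto_sqrt_atTop : Tendsto Real.sqrt atTop atTop := by
  apply tendsto_atTop_atTop.2
  intro b
  refine ⟨(max b 0)^2, fun a ha => ?_⟩
  have h0 : 0 ≤ max b 0 := le_max_right _ _
  have : max b 0 ≤ Real.sqrt a := by
    rw [show a = Real.sqrt a ^ 2 from (Real.sq_sqrt (by nlinarith)).symm] at ha
    nlinarith [Real.sqrt_nonneg a]
  exact (le_max_left b 0).trans this

lemma gauss_shift_integrable (c : ℝ) :
    IntegrableOn (fun u : ℝ => Real.exp (c*u - u^2/2)) (Ioi 0) := by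
  have h : (fun u : ℝ => Real.exp (c*u - u^2/2))
      = fun u : ℝ => Real.exp (c^2/2) * Real.exp (-(1/2) * (u - c)^2) := by
    funext u
    rw [← Real.exp_add]
    congr 1
    ring
  rw [h]
  exact (((integrable_exp_neg_mul_sq (by norm_num : (0:ℝ) < 1/2)).comp_sub_right
    c).const_mul _).integrableOn

lemma sq_gauss_integrable (c : ℝ) :
    IntegrableOn (fun u : ℝ => u^2 * Real.exp (c*u - u^2/2)) (Ioi 0) := by
  apply Integrable.mono' (g := fun u => 4 * Real.exp ((c+1)*u - u^2/2))
  · exact (gauss_shift_integrable (c+1)).const_mul 4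
  · apply Continuous.aestronglyMeasurable
    fun_prop
  · filter_upwards [ae_restrict_mem measurableSet_Ioi] with u hu
    rw [mem_Ioi] at hu
    have hsq : u^2 ≤ 4 * Real.exp u := by
      have h1 : 1 + u/2 ≤ Real.exp (u/2) := by linarith [Real.add_one_le_exp (u/2)]
      have h2 : Real.exp (u/2) * Real.exp (u/2) = Real.exp u := by
        rw [← Real.exp_add]; ring_nf
      nlinarith [Real.exp_pos (u/2)]
    have hnn : 0 ≤ u^2 * Real.exp (c*u - u^2/2) := by positivity
    rw [Real.norm_eq_abs, abs_of_nonneg hnn]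
    calc u^2 * Real.exp (c*u - u^2/2) ≤ (4 * Real.exp u) * Real.exp (c*u - u^2/2) := by
          nlinarith [Real.exp_pos (c*u - u^2/2)]
      _ = 4 * Real.exp ((c+1)*u - u^2/2) := by rw [mul_assoc, ← Real.exp_add]; ring_nf

lemma key_lim (w : ℝ) :
    Tendsto (fun y : ℝ => y * (Real.cosh (w / Real.sqrt y) - 1)) atTop (𝓝 (w^2/2)) := by
  rcases eq_or_ne w 0 with hw | hw
  · simp [hw]
  · have hslope : Tendsto (fun h : ℝ => Real.sinh h / h) (𝓝[≠] 0) (𝓝 1) := by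
      have := (Real.hasDerivAt_sinh 0)
      rw [hasDerivAt_iff_tendsto_slope] at this
      rw [Real.cosh_zero] at this
      apply this.congr
      intro h
      rw [slope_def_field]; simp [Real.sinh_zero]
    have hh : Tendsto (fun y : ℝ => w / (2 * Real.sqrt y)) atTop (𝓝[≠] 0) := by
      rw [tendsto_nhdsWithin_iff]
      constructor
      · have h1 : Tendsto (fun y : ℝ => 2 * Real.sqrt y) atTop atTop :=
          (tendsto_sqrt_atTop).const_mul_atTop two_pos
        have := h1.inv_tendsto_atTop
        have h2 := this.const_mul w
        simpa [div_eq_mul_inv] using h2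
      · filter_upwards [eventually_gt_atTop (0:ℝ)] with y hy
        have : Real.sqrt y > 0 := Real.sqrt_pos.2 hy
        simp only [mem_compl_iff, mem_singleton_iff]
        intro hc
        rw [div_eq_zero_iff] at hc
        rcases hc with h | h
        · exact hw h
        · nlinarith
    have hG : Tendsto (fun y : ℝ =>
        Real.sinh (w / (2 * Real.sqrt y)) / (w / (2 * Real.sqrt y))) atTop (𝓝 1) :=
      hslope.comp hh
    have hfin : Tendsto (fun y : ℝ => w^2/2 *
        (Real.sinh (w / (2 * Real.sqrt y)) / (w / (2 * Real.sqrt y)))^2) atTop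
        (𝓝 (w^2/2)) := by
      have := ((hG.mul hG).const_mul (w^2/2))
      simp only [mul_one] at this
      convert this using 2 <;> ring
    apply hfin.congr'
    filter_upwards [eventually_gt_atTop (0:ℝ)] with y hy
    have hs : 0 < Real.sqrt y := Real.sqrt_pos.2 hy
    have hsq : Real.sqrt y ^ 2 = y := Real.sq_sqrt hy.le
    rw [cosh_sub_one (w / Real.sqrt y),
      show w / Real.sqrt y / 2 = w / (2 * Real.sqrt y) by ring]
    have hws : (w / (2*Real.sqrt y))^2 = w^2/(4*y) := by
      rw [div_pow, mul_pow, hsq]; norm_num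
    rw [div_pow, hws]
    field_simp
    ring

end BKaux


namespace BKaux

section laplace
variable {ν μ : ℝ}

lemma limA (hν : 0 < ν) :
    Tendsto (fun y : ℝ => ∫ u in Ioi (0:ℝ),
      Real.exp (-(y * (Real.cosh (u / Real.sqrt y) - 1))) * Real.cosh (ν * u / Real.sqrt y))
      atTop (𝓝 (∫ u in Ioi (0:ℝ), Real.exp (-(u^2/2)))) := by
  apply tendsto_integral_filter_of_dominated_convergence
    (bound := fun u => Real.exp (ν * u - u^2/2))
  · filter_upwards with y
    apply Continuous.aestronglyMeasurable
    fun_prop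
  · filter_upwards [eventually_ge_atTop (1:ℝ)] with y hy
    filter_upwards [ae_restrict_mem measurableSet_Ioi] with u hu
    rw [mem_Ioi] at hu
    have hy0 : (0:ℝ) < y := by linarith
    have hs1 : 1 ≤ Real.sqrt y := by
      rw [show (1:ℝ) = Real.sqrt 1 by simp]
      exact Real.sqrt_le_sqrt hy
    have hs0 : 0 < Real.sqrt y := by linarith
    have hsq : Real.sqrt y ^ 2 = y := Real.sq_sqrt hy0.le
    have hnn : 0 ≤ Real.exp (-(y * (Real.cosh (u / Real.sqrt y) - 1))) *
        Real.cosh (ν * u / Real.sqrt y) :=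
      mul_nonneg (Real.exp_pos _).le (Real.cosh_pos _).le
    rw [Real.norm_eq_abs, abs_of_nonneg hnn]
    have h1 : u^2/2 ≤ y * (Real.cosh (u/Real.sqrt y) - 1) := by
      have h0 := half_sq_le_cosh_sub_one (u / Real.sqrt y)
      have h2 : (u / Real.sqrt y)^2 = u^2/y := by rw [div_pow, hsq]
      rw [h2] at h0
      have h3 := mul_le_mul_of_nonneg_left h0 hy0.le
      calc u^2/2 = y * (u^2/y/2) := by field_simp
        _ ≤ y * (Real.cosh (u/Real.sqrt y) - 1) := h3
    have h4 : Real.cosh (ν * u / Real.sqrt y) ≤ Real.exp (ν * u) := by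
      refine (cosh_le_exp_abs _).trans (Real.exp_le_exp.2 ?_)
      rw [abs_div, abs_of_pos (mul_pos hν hu), abs_of_pos hs0]
      rw [div_le_iff₀ hs0]
      nlinarith [mul_pos hν hu]
    calc Real.exp (-(y * (Real.cosh (u / Real.sqrt y) - 1))) *
          Real.cosh (ν * u / Real.sqrt y)
        ≤ Real.exp (-(u^2/2)) * Real.exp (ν * u) := by
          apply mul_le_mul (Real.exp_le_exp.2 (by linarith)) h4 (Real.cosh_pos _).le
            (Real.exp_pos _).le
      _ = Real.exp (ν * u - u^2/2) := by rw [← Real.exp_add]; ring_nf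
  · exact gauss_shift_integrable ν
  · filter_upwards [ae_restrict_mem measurableSet_Ioi] with u hu
    have e1 := key_lim u
    have e2 : Tendsto (fun y : ℝ => Real.exp (-(y * (Real.cosh (u / Real.sqrt y) - 1))))
        atTop (𝓝 (Real.exp (-(u^2/2)))) :=
      (Real.continuous_exp.continuousAt.tendsto).comp e1.neg
    have e3 : Tendsto (fun y : ℝ => Real.cosh (ν * u / Real.sqrt y)) atTop (𝓝 1) := by
      have h5 : Tendsto (fun y : ℝ => ν * u / Real.sqrt y) atTop (𝓝 0) := by
        have := (tendsto_sqrt_atTop.inv_tendsto_atTop).const_mul (ν * u)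
        simpa [div_eq_mul_inv] using this
      have := (Real.continuous_cosh.continuousAt.tendsto).comp h5
      simpa [Function.comp_def] using this
    simpa using e2.mul e3

lemma limB (hν : 0 < ν) (hμν : |μ| < ν) :
    Tendsto (fun y : ℝ => ∫ u in Ioi (0:ℝ),
      (y * (Real.cosh (ν * u / Real.sqrt y) - Real.cosh (μ * u / Real.sqrt y))) *
        Real.exp (-(y * (Real.cosh (u / Real.sqrt y) - 1))))
      atTop (𝓝 (∫ u in Ioi (0:ℝ), ((ν*u)^2/2 - (μ*u)^2/2) * Real.exp (-(u^2/2)))) := by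
  apply tendsto_integral_filter_of_dominated_convergence
    (bound := fun u => ν^2/2 * (u^2 * Real.exp (ν * u - u^2/2)))
  · filter_upwards with y
    apply Continuous.aestronglyMeasurable
    fun_prop
  · filter_upwards [eventually_ge_atTop (1:ℝ)] with y hy
    filter_upwards [ae_restrict_mem measurableSet_Ioi] with u hu
    rw [mem_Ioi] at hu
    have hy0 : (0:ℝ) < y := by linarith
    have hs1 : 1 ≤ Real.sqrt y := by
      rw [show (1:ℝ) = Real.sqrt 1 by simp]
      exact Real.sqrt_le_sqrt hy
    have hs0 : 0 < Real.sqrt y := by linarith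
    have hsq : Real.sqrt y ^ 2 = y := Real.sq_sqrt hy0.le
    have hcc : Real.cosh (μ * u / Real.sqrt y) ≤ Real.cosh (ν * u / Real.sqrt y) := by
      have h6 := cosh_mu_le_cosh_nu hμν (t := u / Real.sqrt y) (by positivity)
      rw [← mul_div_assoc, ← mul_div_assoc] at h6
      exact h6
    have hnn : 0 ≤ (y * (Real.cosh (ν * u / Real.sqrt y) - Real.cosh (μ * u / Real.sqrt y))) *
        Real.exp (-(y * (Real.cosh (u / Real.sqrt y) - 1))) := by
      apply mul_nonneg (mul_nonneg hy0.le (by linarith)) (Real.exp_pos _).le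
    rw [Real.norm_eq_abs, abs_of_nonneg hnn]
    have h1 : u^2/2 ≤ y * (Real.cosh (u/Real.sqrt y) - 1) := by
      have h0 := half_sq_le_cosh_sub_one (u / Real.sqrt y)
      have h2 : (u / Real.sqrt y)^2 = u^2/y := by rw [div_pow, hsq]
      rw [h2] at h0
      have h3 := mul_le_mul_of_nonneg_left h0 hy0.le
      calc u^2/2 = y * (u^2/y/2) := by field_simp
        _ ≤ y * (Real.cosh (u/Real.sqrt y) - 1) := h3
    have hexp : Real.exp (-(y * (Real.cosh (u / Real.sqrt y) - 1))) ≤ Real.exp (-(u^2/2)) :=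
      Real.exp_le_exp.2 (by linarith)
    have h4 : Real.cosh (ν * u / Real.sqrt y) ≤ Real.exp (ν * u) := by
      refine (cosh_le_exp_abs _).trans (Real.exp_le_exp.2 ?_)
      rw [abs_div, abs_of_pos (mul_pos hν hu), abs_of_pos hs0]
      rw [div_le_iff₀ hs0]
      nlinarith [mul_pos hν hu]
    have h7 : y * (Real.cosh (ν * u / Real.sqrt y) - Real.cosh (μ * u / Real.sqrt y))
        ≤ ν^2/2 * u^2 * Real.exp (ν * u) := by
      have h8 : Real.cosh (ν * u / Real.sqrt y) - 1
          ≤ (ν * u / Real.sqrt y)^2/2 * Real.cosh (ν * u / Real.sqrt y) :=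
        cosh_sub_one_le _
      have h9 : (ν * u / Real.sqrt y)^2 = (ν*u)^2/y := by rw [div_pow, hsq]
      rw [h9] at h8
      have h10 : Real.cosh (μ * u / Real.sqrt y) ≥ 1 := Real.one_le_cosh _
      have h11 : y * (Real.cosh (ν * u / Real.sqrt y) - Real.cosh (μ * u / Real.sqrt y))
          ≤ y * (Real.cosh (ν * u / Real.sqrt y) - 1) := by nlinarith
      have h12 : y * ((ν*u)^2/y/2 * Real.cosh (ν * u / Real.sqrt y))
          = (ν*u)^2/2 * Real.cosh (ν * u / Real.sqrt y) := by field_simp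
      have h13 := mul_le_mul_of_nonneg_left h8 hy0.le
      rw [h12] at h13
      have h14 : (ν*u)^2/2 * Real.cosh (ν * u / Real.sqrt y)
          ≤ (ν*u)^2/2 * Real.exp (ν * u) :=
        mul_le_mul_of_nonneg_left h4 (by positivity)
      calc y * (Real.cosh (ν * u / Real.sqrt y) - Real.cosh (μ * u / Real.sqrt y))
          ≤ y * (Real.cosh (ν * u / Real.sqrt y) - 1) := h11
        _ ≤ (ν*u)^2/2 * Real.cosh (ν * u / Real.sqrt y) := h13
        _ ≤ (ν*u)^2/2 * Real.exp (ν * u) := h14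
        _ = ν^2/2 * u^2 * Real.exp (ν * u) := by ring
    calc (y * (Real.cosh (ν * u / Real.sqrt y) - Real.cosh (μ * u / Real.sqrt y))) *
          Real.exp (-(y * (Real.cosh (u / Real.sqrt y) - 1)))
        ≤ (ν^2/2 * u^2 * Real.exp (ν * u)) * Real.exp (-(u^2/2)) := by
          apply mul_le_mul h7 hexp (Real.exp_pos _).le (by positivity)
      _ = ν^2/2 * (u^2 * Real.exp (ν * u - u^2/2)) := by
          rw [mul_assoc, mul_assoc, ← Real.exp_add]; ring_nf
  · exact (sq_gauss_integrable ν).const_mul _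
  · filter_upwards [ae_restrict_mem measurableSet_Ioi] with u hu
    have e1 : Tendsto (fun y : ℝ => y * (Real.cosh (ν * u / Real.sqrt y) -
        Real.cosh (μ * u / Real.sqrt y))) atTop (𝓝 ((ν*u)^2/2 - (μ*u)^2/2)) := by
      have k1 := key_lim (ν * u)
      have k2 := key_lim (μ * u)
      have := k1.sub k2
      apply this.congr
      intro y
      ring
    have e2 : Tendsto (fun y : ℝ => Real.exp (-(y * (Real.cosh (u / Real.sqrt y) - 1))))
        atTop (𝓝 (Real.exp (-(u^2/2)))) :=
      (Real.continuous_exp.continuousAt.tendsto).comp (key_lim u).neg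
    exact e1.mul e2

end laplace
end BKaux

namespace BKaux
section subst
variable {ν μ : ℝ}

lemma substA (ν : ℝ) {y : ℝ} (hy : 0 < y) :
    (∫ u in Ioi (0:ℝ), Real.exp (-(y * (Real.cosh (u / Real.sqrt y) - 1))) *
      Real.cosh (ν * u / Real.sqrt y)) = Real.sqrt y * (Real.exp y * besselK ν y) := by
  have hs0 : 0 < Real.sqrt y := Real.sqrt_pos.2 hy
  have hb : 0 < (Real.sqrt y)⁻¹ := inv_pos.2 hs0
  have key := integral_comp_mul_left_Ioi
    (fun t => Real.exp y * (Real.exp (-y * Real.cosh t) * Real.cosh (ν * t))) 0 hb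
  simp only [mul_zero, inv_inv] at key
  have heq : ∀ u : ℝ, Real.exp (-(y * (Real.cosh (u / Real.sqrt y) - 1))) *
      Real.cosh (ν * u / Real.sqrt y) =
      Real.exp y * (Real.exp (-y * Real.cosh ((Real.sqrt y)⁻¹ * u)) *
        Real.cosh (ν * ((Real.sqrt y)⁻¹ * u))) := by
    intro u
    rw [show (Real.sqrt y)⁻¹ * u = u / Real.sqrt y by rw [div_eq_inv_mul],
      show ν * (u / Real.sqrt y) = ν * u / Real.sqrt y by rw [mul_div_assoc]]
    rw [← mul_assoc, ← Real.exp_add]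
    congr 2
    ring
  calc (∫ u in Ioi (0:ℝ), Real.exp (-(y * (Real.cosh (u / Real.sqrt y) - 1))) *
        Real.cosh (ν * u / Real.sqrt y))
      = ∫ u in Ioi (0:ℝ), Real.exp y * (Real.exp (-y * Real.cosh ((Real.sqrt y)⁻¹ * u)) *
          Real.cosh (ν * ((Real.sqrt y)⁻¹ * u))) := by
        apply setIntegral_congr_fun measurableSet_Ioi
        intro u _
        exact heq u
    _ = Real.sqrt y • ∫ t in Ioi (0:ℝ),
          Real.exp y * (Real.exp (-y * Real.cosh t) * Real.cosh (ν * t)) := key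
    _ = Real.sqrt y * (Real.exp y * besselK ν y) := by
        rw [smul_eq_mul, integral_const_mul, besselK]

lemma substB (ν μ : ℝ) {y : ℝ} (hy : 0 < y) :
    (∫ u in Ioi (0:ℝ),
      (y * (Real.cosh (ν * u / Real.sqrt y) - Real.cosh (μ * u / Real.sqrt y))) *
        Real.exp (-(y * (Real.cosh (u / Real.sqrt y) - 1))))
      = y * Real.sqrt y * (Real.exp y * (besselK ν y - besselK μ y)) := by
  have hs0 : 0 < Real.sqrt y := Real.sqrt_pos.2 hy
  have hb : 0 < (Real.sqrt y)⁻¹ := inv_pos.2 hs0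
  have key := integral_comp_mul_left_Ioi
    (fun t => y * Real.exp y * (Real.exp (-y * Real.cosh t) * Real.cosh (ν * t)
      - Real.exp (-y * Real.cosh t) * Real.cosh (μ * t))) 0 hb
  simp only [mul_zero, inv_inv] at key
  have heq : ∀ u : ℝ,
      (y * (Real.cosh (ν * u / Real.sqrt y) - Real.cosh (μ * u / Real.sqrt y))) *
        Real.exp (-(y * (Real.cosh (u / Real.sqrt y) - 1))) =
      y * Real.exp y * (Real.exp (-y * Real.cosh ((Real.sqrt y)⁻¹ * u)) *
          Real.cosh (ν * ((Real.sqrt y)⁻¹ * u))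
        - Real.exp (-y * Real.cosh ((Real.sqrt y)⁻¹ * u)) *
          Real.cosh (μ * ((Real.sqrt y)⁻¹ * u))) := by
    intro u
    rw [show (Real.sqrt y)⁻¹ * u = u / Real.sqrt y by rw [div_eq_inv_mul],
      show ν * (u / Real.sqrt y) = ν * u / Real.sqrt y by rw [mul_div_assoc],
      show μ * (u / Real.sqrt y) = μ * u / Real.sqrt y by rw [mul_div_assoc]]
    rw [← mul_sub, ← mul_assoc]
    rw [show Real.exp (-(y * (Real.cosh (u / Real.sqrt y) - 1)))
        = Real.exp y * Real.exp (-y * Real.cosh (u / Real.sqrt y)) by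
      rw [← Real.exp_add]; congr 1; ring]
    ring
  calc (∫ u in Ioi (0:ℝ),
        (y * (Real.cosh (ν * u / Real.sqrt y) - Real.cosh (μ * u / Real.sqrt y))) *
          Real.exp (-(y * (Real.cosh (u / Real.sqrt y) - 1))))
      = ∫ u in Ioi (0:ℝ), y * Real.exp y *
          (Real.exp (-y * Real.cosh ((Real.sqrt y)⁻¹ * u)) *
            Real.cosh (ν * ((Real.sqrt y)⁻¹ * u))
          - Real.exp (-y * Real.cosh ((Real.sqrt y)⁻¹ * u)) *
            Real.cosh (μ * ((Real.sqrt y)⁻¹ * u))) := by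
        apply setIntegral_congr_fun measurableSet_Ioi
        intro u _
        exact heq u
    _ = Real.sqrt y • ∫ t in Ioi (0:ℝ), y * Real.exp y *
          (Real.exp (-y * Real.cosh t) * Real.cosh (ν * t)
            - Real.exp (-y * Real.cosh t) * Real.cosh (μ * t)) := key
    _ = y * Real.sqrt y * (Real.exp y * (besselK ν y - besselK μ y)) := by
        rw [smul_eq_mul, integral_const_mul, besselK, besselK,
          integral_sub (besselK_integrableOn ν hy) (besselK_integrableOn μ hy)]
        ring

set_option maxHeartbeats 2000000 in
lemma ratio_tendsto (hν : 0 < ν) (hμν : |μ| < ν) :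
    Tendsto (fun y : ℝ => y * (besselK ν y - besselK μ y) / besselK ν y) atTop
      (𝓝 ((ν^2 - μ^2)/2)) := by
  have hI₀form : (∫ u in Ioi (0:ℝ), Real.exp (-(u^2/2)))
      = ∫ u in Ioi (0:ℝ), Real.exp (-(1/2) * u^2) := by
    apply setIntegral_congr_fun measurableSet_Ioi
    intro u _
    show Real.exp (-(u^2/2)) = Real.exp (-(1/2)*u^2)
    rw [show -(u^2/2) = -(1/2)*u^2 by ring]
  have hI₀pos : 0 < ∫ u in Ioi (0:ℝ), Real.exp (-(u^2/2)) := by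
    rw [hI₀form, integral_gaussian_Ioi]
    have : 0 < Real.sqrt (π/(1/2)) := Real.sqrt_pos.2 (by positivity)
    linarith
  -- I₂ = I₀
  have hIntSq : IntegrableOn (fun u : ℝ => u^2 * Real.exp (-(u^2/2))) (Ioi 0) := by
    have := sq_gauss_integrable 0
    apply this.congr_fun ?_ measurableSet_Ioi
    intro u _
    norm_num
  have hIntG : IntegrableOn (fun u : ℝ => Real.exp (-(u^2/2))) (Ioi 0) := by
    have := gauss_shift_integrable 0
    apply this.congr_fun ?_ measurableSet_Ioi
    intro u _
    norm_num
  have hI₂ : (∫ u in Ioi (0:ℝ), u^2 * Real.exp (-(u^2/2)))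
      = ∫ u in Ioi (0:ℝ), Real.exp (-(u^2/2)) := by
    have hder : ∀ u ∈ Ici (0:ℝ), HasDerivAt (fun u : ℝ => -u * Real.exp (-(u^2/2)))
        ((u^2 - 1) * Real.exp (-(u^2/2))) u := by
      intro u _
      have h1 : HasDerivAt (fun u : ℝ => -(u^2/2)) (-u) u := by
        have := ((hasDerivAt_pow 2 u).div_const 2).fun_neg
        exact this.congr_deriv (by norm_num)
      have h2 : HasDerivAt (fun u : ℝ => Real.exp (-(u^2/2)))
          (Real.exp (-(u^2/2)) * (-u)) u := (Real.hasDerivAt_exp _).comp u h1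
      have h3 := ((hasDerivAt_id' u).fun_neg.fun_mul h2)
      exact h3.congr_deriv (by ring)
    have hlim : Tendsto (fun u : ℝ => -u * Real.exp (-(u^2/2))) atTop (𝓝 0) := by
      have hub : Tendsto (fun u : ℝ => Real.exp (u - u^2/2)) atTop (𝓝 0) := by
        apply Real.tendsto_exp_atBot.comp
        have h5 : Tendsto (fun u : ℝ => u - 1) atTop atTop :=
          tendsto_atTop_add_const_right _ _ tendsto_id
        have h4 : Tendsto (fun u : ℝ => (u-1)*(u-1)/2 - 1/2) atTop atTop := by
          apply tendsto_atTop_add_const_right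
          exact Tendsto.atTop_div_const (by norm_num) (h5.atTop_mul_atTop₀ h5)
        have h6 := (tendsto_neg_atTop_atBot.comp h4)
        apply h6.congr
        intro u
        simp only [Function.comp_apply]
        ring
      apply squeeze_zero_norm' ?_ hub
      filter_upwards [eventually_ge_atTop (0:ℝ)] with u hu
      have h7 : u ≤ Real.exp u := by linarith [Real.add_one_le_exp u]
      calc ‖-u * Real.exp (-(u^2/2))‖ = u * Real.exp (-(u^2/2)) := by
            rw [Real.norm_eq_abs, abs_mul, abs_neg, abs_of_nonneg hu,
              abs_of_pos (Real.exp_pos _)]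
        _ ≤ Real.exp u * Real.exp (-(u^2/2)) :=
            mul_le_mul_of_nonneg_right h7 (Real.exp_pos _).le
        _ = Real.exp (u - u^2/2) := by rw [← Real.exp_add]; ring_nf
    have hcont : ContinuousWithinAt (fun u : ℝ => -u * Real.exp (-(u^2/2))) (Ici 0) 0 := by
      apply Continuous.continuousWithinAt
      fun_prop
    have hIntD : IntegrableOn (fun u : ℝ => (u^2 - 1) * Real.exp (-(u^2/2))) (Ioi 0) := by
      have hsub : IntegrableOn (fun u : ℝ => u^2 * Real.exp (-(u^2/2))
          - Real.exp (-(u^2/2))) (Ioi 0) := hIntSq.sub hIntG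
      apply hsub.congr_fun ?_ measurableSet_Ioi
      intro u _
      show u^2 * Real.exp (-(u^2/2)) - Real.exp (-(u^2/2)) = (u^2 - 1) * Real.exp (-(u^2/2))
      ring
    have hFTC := integral_Ioi_of_hasDerivAt_of_tendsto hcont
      (fun x hx => hder x (mem_Ici.2 (le_of_lt hx))) hIntD hlim
    simp only [neg_zero, zero_mul, sub_zero] at hFTC
    have hsplit : (∫ u in Ioi (0:ℝ), (u^2 - 1) * Real.exp (-(u^2/2)))
        = (∫ u in Ioi (0:ℝ), u^2 * Real.exp (-(u^2/2)))
          - ∫ u in Ioi (0:ℝ), Real.exp (-(u^2/2)) := by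
      rw [← integral_sub hIntSq hIntG]
      apply setIntegral_congr_fun measurableSet_Ioi
      intro u _
      ring
    rw [hsplit] at hFTC
    linarith
  -- combine
  have hA := limA hν
  have hB := limB hν hμν
  have hJ : (∫ u in Ioi (0:ℝ), ((ν*u)^2/2 - (μ*u)^2/2) * Real.exp (-(u^2/2)))
      = (ν^2 - μ^2)/2 * ∫ u in Ioi (0:ℝ), Real.exp (-(u^2/2)) := by
    rw [← hI₂, ← integral_const_mul]
    apply setIntegral_congr_fun measurableSet_Ioi
    intro u _
    ring
  have hq := hB.div hA (ne_of_gt hI₀pos)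
  rw [hJ] at hq
  have hval : (ν^2 - μ^2)/2 * (∫ u in Ioi (0:ℝ), Real.exp (-(u^2/2)))
      / (∫ u in Ioi (0:ℝ), Real.exp (-(u^2/2))) = (ν^2 - μ^2)/2 := by
    rw [mul_div_assoc, div_self (ne_of_gt hI₀pos), mul_one]
  rw [hval] at hq
  apply hq.congr'
  filter_upwards [eventually_ge_atTop (1:ℝ)] with y hy
  have hy0 : (0:ℝ) < y := by linarith
  rw [Pi.div_apply, substA ν hy0, substB ν μ hy0]
  have hs0 : 0 < Real.sqrt y := Real.sqrt_pos.2 hy0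
  have hK : 0 < besselK ν y := besselK_pos ν hy0
  have hE : 0 < Real.exp y := Real.exp_pos y
  field_simp

end subst
end BKaux


namespace BKaux

lemma main_aux {ν μ θ : ℝ} (hν : 0 < ν) (hμν : |μ| < ν) (hθ : 0 < θ)
    (M : ℝ → ℝ) (hMpos : ∀ σ : ℝ, 0 < σ → 0 < M σ)
    (hmode : ∀ σ : ℝ, 0 < σ → Real.sqrt (θ^2 + σ^2) / θ *
      (besselK μ (Real.sqrt (θ^2+σ^2) / σ^2 * M σ) /
       besselK ν (Real.sqrt (θ^2+σ^2) / σ^2 * M σ)) = 1) :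
    Tendsto M (𝓝[>] (0:ℝ)) (𝓝 (2 * θ * ((ν^2 - μ^2)/2))) := by
  have hcpos : ∀ σ : ℝ, 0 < Real.sqrt (θ^2+σ^2) := fun σ => Real.sqrt_pos.2 (by positivity)
  have hsq : ∀ σ : ℝ, Real.sqrt (θ^2+σ^2)^2 = θ^2 + σ^2 :=
    fun σ => Real.sq_sqrt (by positivity)
  have hcθ : ∀ σ : ℝ, 0 < σ → θ < Real.sqrt (θ^2+σ^2) := by
    intro σ hσ
    have h := hsq σ
    nlinarith [hcpos σ, sq_nonneg (Real.sqrt (θ^2+σ^2) - θ)]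
  have hxpos : ∀ σ : ℝ, 0 < σ → 0 < Real.sqrt (θ^2+σ^2) / σ^2 * M σ := by
    intro σ hσ
    exact mul_pos (div_pos (hcpos σ) (by positivity)) (hMpos σ hσ)
  have hkey : ∀ σ : ℝ, 0 < σ →
      besselK μ (Real.sqrt (θ^2+σ^2)/σ^2 * M σ)
        = θ / Real.sqrt (θ^2+σ^2) * besselK ν (Real.sqrt (θ^2+σ^2)/σ^2 * M σ) := by
    intro σ hσ
    have hKν := besselK_pos ν (hxpos σ hσ)
    have h := hmode σ hσ
    have hc := hcpos σ
    set Kν : ℝ := besselK ν (Real.sqrt (θ^2+σ^2)/σ^2 * M σ) with hKνdef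
    set Kμ : ℝ := besselK μ (Real.sqrt (θ^2+σ^2)/σ^2 * M σ) with hKμdef
    set s : ℝ := Real.sqrt (θ^2+σ^2) with hsdef
    rw [div_mul_div_comm, div_eq_one_iff_eq (by positivity)] at h
    rw [div_mul_eq_mul_div, eq_div_iff hc.ne']
    linarith
  have hM : ∀ σ : ℝ, 0 < σ → M σ = (Real.sqrt (θ^2+σ^2) + θ) *
      ((Real.sqrt (θ^2+σ^2)/σ^2 * M σ) *
        (besselK ν (Real.sqrt (θ^2+σ^2)/σ^2 * M σ)
          - besselK μ (Real.sqrt (θ^2+σ^2)/σ^2 * M σ)) /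
        besselK ν (Real.sqrt (θ^2+σ^2)/σ^2 * M σ)) := by
    intro σ hσ
    have hKν := besselK_pos ν (hxpos σ hσ)
    have hc := hcpos σ
    have hs := hsq σ
    rw [hkey σ hσ]
    set Kν : ℝ := besselK ν (Real.sqrt (θ^2+σ^2)/σ^2 * M σ) with hKνdef
    set s : ℝ := Real.sqrt (θ^2+σ^2) with hsdef
    have e1 : Kν - θ/s*Kν = (s-θ)/s * Kν := by field_simp
    rw [e1]
    have e2 : (s/σ^2 * M σ) * ((s-θ)/s*Kν) / Kν = (s-θ)/σ^2 * M σ := by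
      field_simp
    rw [e2]
    have e3 : (s+θ) * ((s-θ)/σ^2 * M σ) = ((s^2-θ^2)/σ^2) * M σ := by ring
    rw [e3, hs]
    have e4 : (θ^2 + σ^2 - θ^2)/σ^2 = 1 := by
      field_simp
      ring
    rw [e4, one_mul]
  -- tendsto of c
  have hccont : Tendsto (fun σ : ℝ => Real.sqrt (θ^2+σ^2)) (𝓝[>](0:ℝ)) (𝓝 θ) := by
    apply tendsto_nhdsWithin_of_tendsto_nhds
    have hcont : Continuous (fun σ : ℝ => Real.sqrt (θ^2+σ^2)) := by fun_prop
    have := hcont.tendsto 0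
    simpa [Real.sqrt_sq hθ.le] using this
  have hquot : Tendsto (fun σ : ℝ => σ^2 / (Real.sqrt (θ^2+σ^2) *
      (Real.sqrt (θ^2+σ^2) + θ))) (𝓝[>](0:ℝ)) (𝓝 0) := by
    have hnum : Tendsto (fun σ : ℝ => σ^2) (𝓝[>](0:ℝ)) (𝓝 0) := by
      apply tendsto_nhdsWithin_of_tendsto_nhds
      have := (continuous_pow 2).tendsto (0:ℝ)
      simpa using this
    have hden : Tendsto (fun σ : ℝ => Real.sqrt (θ^2+σ^2) * (Real.sqrt (θ^2+σ^2) + θ))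
        (𝓝[>](0:ℝ)) (𝓝 (θ * (θ + θ))) := hccont.mul (hccont.add_const θ)
    have := hnum.div hden (by positivity)
    simpa [Pi.div_def] using this
  -- x tends to atTop
  have hxTop : Tendsto (fun σ : ℝ => Real.sqrt (θ^2+σ^2)/σ^2 * M σ)
      (𝓝[>](0:ℝ)) atTop := by
    rw [tendsto_atTop]
    intro Y
    obtain ⟨ε, hε, hgap⟩ := besselK_gap hν hμν (lt_max_of_lt_right one_pos : (0:ℝ) < max Y 1)
    filter_upwards [hquot.eventually (eventually_lt_nhds hε), self_mem_nhdsWithin]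
      with σ hσ1 hσ2
    rw [mem_Ioi] at hσ2
    by_contra hcon
    push_neg at hcon
    have hxY : Real.sqrt (θ^2+σ^2)/σ^2 * M σ ≤ max Y 1 :=
      le_trans hcon.le (le_max_left _ _)
    have hg := hgap _ (hxpos σ hσ2) hxY
    rw [hkey σ hσ2] at hg
    have hKν := besselK_pos ν (hxpos σ hσ2)
    have hc := hcpos σ
    have hcθ' := hcθ σ hσ2
    have hs := hsq σ
    -- θ/c ≤ 1 - ε  →  ε ≤ (c-θ)/c = σ²/(c(c+θ))
    have h1 : θ / Real.sqrt (θ^2+σ^2) ≤ 1 - ε :=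
      (mul_le_mul_iff_left₀ hKν).mp hg
    have h2 : ε ≤ σ^2 / (Real.sqrt (θ^2+σ^2) * (Real.sqrt (θ^2+σ^2) + θ)) := by
      rw [div_le_iff₀ hc] at h1
      rw [le_div_iff₀ (by positivity)]
      nlinarith
    linarith
  -- final composition
  have hF := (ratio_tendsto hν hμν).comp hxTop
  have hsum : Tendsto (fun σ : ℝ => Real.sqrt (θ^2+σ^2) + θ) (𝓝[>](0:ℝ)) (𝓝 (θ + θ)) :=
    hccont.add_const θ
  have hmul := hsum.mul hF
  have hval : (θ + θ) * ((ν^2 - μ^2)/2) = 2 * θ * ((ν^2 - μ^2)/2) := by ring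
  rw [hval] at hmul
  apply hmul.congr'
  filter_upwards [self_mem_nhdsWithin] with σ hσ
  rw [mem_Ioi] at hσ
  exact (hM σ hσ).symm

end BKaux

theorem stmt_19 (lam θ : ℝ) (hlam : 1 < lam) (hθ : 0 < θ) (M : ℝ → ℝ)
    (hMpos : ∀ σ : ℝ, 0 < σ → 0 < M σ)
    (hmode : ∀ σ : ℝ, 0 < σ →
      Real.sqrt (θ ^ 2 + σ ^ 2) / θ *
        (besselK (lam - 3 / 2) (Real.sqrt (θ ^ 2 + σ ^ 2) / σ ^ 2 * M σ) /
          besselK (lam - 1 / 2) (Real.sqrt (θ ^ 2 + σ ^ 2) / σ ^ 2 * M σ)) = 1) :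
    Filter.Tendsto M (nhdsWithin 0 (Set.Ioi 0)) (nhds (2 * θ * (lam - 1))) := by
  have hν : 0 < lam - 1/2 := by linarith
  have hμν : |lam - 3/2| < lam - 1/2 := abs_lt.2 ⟨by linarith, by linarith⟩
  have := BKaux.main_aux hν hμν hθ M hMpos (by
    intro σ hσ
    have := hmode σ hσ
    convert this using 4 <;> norm_num)
  have hval : 2 * θ * (((lam - 1/2)^2 - (lam - 3/2)^2)/2) = 2 * θ * (lam - 1) := by ring
  rw [hval] at this
  exact this
end
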